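/- Let D be a 4×4 complex matrix (entries D_{ij}, 0-based indexing, row i and column j). The linear map x ↦ D·x on ℂ⁴ is a derivation of the 4-dimensional Mock-Lie algebra A_{1,3} ⊕ A_{0,1} if and only if D_{01} = 0, D_{03} = 0, D_{21} = 0, D_{23} = 0, D_{31} = 0, D_{00} = D_{22}, D_{02} = −D_{20}, and D_{11} = 2·D_{22}. Equivalently, the derivations are exactly the linear maps whose matrix relative to the basis (e_1, e_2, e_3, e_4) has the form [[d_{33}, 0, −d_{31}, 0], [d_{21}, 2d_{33}, d_{23}, d_{24}], [d_{31}, 0, d_{33}, 0], [d_{41}, 0, d_{43}, d_{44}]]. -/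
import Mathlib


/-- The product of the 4-dimensional Mock-Lie algebra `A_{1,3} ⊕ A_{0,1}`:
`e_1 · e_1 = e_2`, `e_3 · e_3 = e_2`, all other products of basis vectors zero. -/
def mulA13A01 (x y : Fin 4 → ℂ) : Fin 4 → ℂ := ![0, x 0 * y 0 + x 2 * y 2, 0, 0]

/-- `x ↦ D · x` is a derivation of `A_{1,3} ⊕ A_{0,1}` iff
`D 0 1 = 0`, `D 0 3 = 0`, `D 2 1 = 0`, `D 2 3 = 0`, `D 3 1 = 0`,
`D 0 0 = D 2 2`, `D 0 2 = -D 2 0` and `D 1 1 = 2 * D 2 2`. -/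
theorem derivation_A13_A01_iff (D : Matrix (Fin 4) (Fin 4) ℂ) :
    (∀ x y : Fin 4 → ℂ,
        D.mulVec (mulA13A01 x y) = mulA13A01 (D.mulVec x) y + mulA13A01 x (D.mulVec y)) ↔
      (D 0 1 = 0 ∧ D 0 3 = 0 ∧ D 2 1 = 0 ∧ D 2 3 = 0 ∧ D 3 1 = 0 ∧
        D 0 0 = D 2 2 ∧ D 0 2 = -D 2 0 ∧ D 1 1 = 2 * D 2 2) := by
  have key : ∀ x y i, Matrix.mulVec D (mulA13A01 x y) i = D i 1 * (x 0 * y 0 + x 2 * y 2) := by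
    intro x y i
    simp [Matrix.mulVec, dotProduct, Fin.sum_univ_four, mulA13A01]
  constructor
  · intro h
    have h1 := h ![1,0,0,0] ![1,0,0,0]
    have h2 := h ![0,0,1,0] ![0,0,1,0]
    have h3 := h ![1,0,0,0] ![0,0,1,0]
    have h4 := h ![1,0,0,0] ![0,0,0,1]
    have h5 := h ![0,0,1,0] ![0,0,0,1]
    have e1 := congrFun h1 0
    have e2 := congrFun h1 1
    have e3 := congrFun h1 2
    have e4 := congrFun h1 3
    have f2 := congrFun h2 1
    have f3 := congrFun h2 2
    have g2 := congrFun h3 1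
    have p2 := congrFun h4 1
    have q2 := congrFun h5 1
    rw [key] at e1 e2 e3 e4 f2 f3 g2 p2 q2
    simp [mulA13A01, Matrix.mulVec, dotProduct, Fin.sum_univ_four] at e1 e2 e3 e4 f2 f3 g2 p2 q2
    refine ⟨e1, p2.symm, f3, q2.symm, e4, ?_, ?_, ?_⟩
    · linear_combination f2 / 2 - e2 / 2
    · linear_combination -g2
    · linear_combination f2
  · rintro ⟨h1, h2, h3, h4, h5, h6, h7, h8⟩ x y
    funext i
    rw [key]
    fin_cases i
    · simpa [mulA13A01] using Or.inl h1
    · simp [mulA13A01, Matrix.mulVec, dotProduct, Fin.sum_univ_four, h1, h2, h3, h4, h6, h7, h8]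
      ring
    · simpa [mulA13A01] using Or.inl h3
    · simpa [mulA13A01] using Or.inl h5
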